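/- arXiv:1605.04065 — 2 statements merged into one kernel-verified Lean document; each statement's English description precedes it below -/
import Mathlib

section
/- Define A_μ = { g ∈ G : lim_{n→∞} μ^{*n}(g)/μ^{*n}(e) = 1 }. Then A_μ coincides with { g ∈ G : ‖g·ξ_n − ξ_n‖₂ → 0 }, where ξ_n = μ^{*n}/‖μ^{*n}‖₂. -/
open Filter Topology
open scoped Classical

/-- Convolution of two real-valued functions on a discrete group. -/
noncomputable def conv {G : Type*} [Group G] (μ τ : G → ℝ) : G → ℝ :=
  fun y => ∑' x : G, μ x * τ (x⁻¹ * y)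

/-- `n`-fold convolution power, with `μ^{*0}` the Dirac mass at the identity. -/
noncomputable def convPow {G : Type*} [Group G] (μ : G → ℝ) : ℕ → G → ℝ
  | 0 => fun x => if x = 1 then 1 else 0
  | n + 1 => conv (convPow μ n) μ

/-- `μ` is a probability measure on the discrete group `G`. -/
def IsProb {G : Type*} [Group G] (μ : G → ℝ) : Prop :=
  (∀ x, 0 ≤ μ x) ∧ ∑' x : G, μ x = 1

/-- `μ` is symmetric. -/
def MeasSymm {G : Type*} [Group G] (μ : G → ℝ) : Prop := ∀ x, μ x⁻¹ = μ x

/-- `μ` is aperiodic: `gcd { n ≥ 1 | μ^{*n}(e) > 0 } = 1`. -/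
def IsAperiodic {G : Type*} [Group G] (μ : G → ℝ) : Prop :=
  ∀ d : ℕ, (∀ n : ℕ, 1 ≤ n → 0 < convPow μ n 1 → d ∣ n) → d = 1

/-- The support of `μ` generates `G`. -/
def GeneratingSupport {G : Type*} [Group G] (μ : G → ℝ) : Prop :=
  Subgroup.closure {x : G | 0 < μ x} = ⊤

/-- The set `A_μ = { g | μ^{*n}(g)/μ^{*n}(e) → 1 }`. -/
def Amu {G : Type*} [Group G] (μ : G → ℝ) : Set G :=
  {g | Tendsto (fun n => convPow μ n g / convPow μ n 1) atTop (𝓝 1)}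

/-- ℓ² inner product. -/
noncomputable def l2inner {G : Type*} (f h : G → ℝ) : ℝ := ∑' x : G, f x * h x

/-- ℓ² norm. -/
noncomputable def l2norm {G : Type*} (f : G → ℝ) : ℝ :=
  Real.sqrt (∑' x : G, (f x) ^ 2)

/-- Left translation: `(g · f)(x) = f (g⁻¹ x)`. -/
def ltrans {G : Type*} [Group G] (g : G) (f : G → ℝ) : G → ℝ := fun x => f (g⁻¹ * x)

/-- The normalized convolution powers `ξ_n = μ^{*n}/‖μ^{*n}‖₂`. -/
noncomputable def xi {G : Type*} [Group G] (μ : G → ℝ) (n : ℕ) : G → ℝ :=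
  fun x => convPow μ n x / l2norm (convPow μ n)

/-- Reiter-type characterization of amenability: a sequence of almost-invariant
unit vectors in `ℓ²(K)`. -/
def ReiterAmenable (K : Type*) [Group K] : Prop :=
  ∃ ψ : ℕ → K → ℝ, (∀ n, ∑' x : K, (ψ n x) ^ 2 = 1) ∧
    ∀ k : K, Tendsto
      (fun n => Real.sqrt (∑' x : K, (ψ n (k⁻¹ * x) - ψ n x) ^ 2)) atTop (𝓝 0)

set_option linter.unusedSectionVars false
set_option linter.unusedVariables false

section basic
variable {G : Type*} [Group G] {μ τ : G → ℝ}

lemma IsProb.summable (h : IsProb μ) : Summable μ := by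
  by_contra hs
  have := tsum_eq_zero_of_not_summable hs
  rw [h.2] at this; norm_num at this

lemma nonneg_le_tsum (h0 : ∀ x, 0 ≤ μ x) (hs : Summable μ) (x : G) : μ x ≤ ∑' y, μ y :=
  Summable.le_tsum hs x (fun j _ => h0 j)

lemma IsProb.le_one (h : IsProb μ) (x : G) : μ x ≤ 1 := by
  have := nonneg_le_tsum h.1 h.summable x
  rwa [h.2] at this

-- summability of a slice of the convolution
lemma conv_slice_summable (h0 : ∀ x, 0 ≤ μ x) (t0 : ∀ x, 0 ≤ τ x)
    (hs : Summable μ) (ts : Summable τ) (y : G) :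
    Summable (fun x : G => μ x * τ (x⁻¹ * y)) := by
  refine Summable.of_nonneg_of_le (fun x => mul_nonneg (h0 x) (t0 _)) (fun x => ?_)
    (hs.mul_right (∑' z, τ z))
  exact mul_le_mul_of_nonneg_left (nonneg_le_tsum t0 ts _) (h0 x)

lemma conv_nonneg (h0 : ∀ x, 0 ≤ μ x) (t0 : ∀ x, 0 ≤ τ x) (y : G) :
    0 ≤ conv μ τ y := tsum_nonneg (fun x => mul_nonneg (h0 x) (t0 _))

lemma tsum_translate (f : G → ℝ) (a : G) : ∑' x, f (a * x) = ∑' x, f x :=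
  (Equiv.mulLeft a).tsum_eq f

lemma tsum_translate' (f : G → ℝ) (a : G) : ∑' x, f (a⁻¹ * x) = ∑' x, f x :=
  (Equiv.mulLeft a⁻¹).tsum_eq f

lemma conv_uncurry_summable (h0 : ∀ x, 0 ≤ μ x) (t0 : ∀ x, 0 ≤ τ x)
    (hs : Summable μ) (ts : Summable τ) :
    Summable (fun p : G × G => μ p.1 * τ (p.1⁻¹ * p.2)) := by
  rw [summable_prod_of_nonneg (fun p => mul_nonneg (h0 _) (t0 _))]
  constructor
  · intro x
    have : Summable (fun y => τ (x⁻¹ * y)) := (Equiv.mulLeft x⁻¹).summable_iff.mpr ts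
    exact this.mul_left (μ x)
  · have : ∀ x : G, ∑' y, μ x * τ (x⁻¹ * y) = μ x * ∑' z, τ z := by
      intro x
      rw [tsum_mul_left, tsum_translate' τ x]
    simp only [this]
    exact hs.mul_right _

lemma conv_summable (h0 : ∀ x, 0 ≤ μ x) (t0 : ∀ x, 0 ≤ τ x)
    (hs : Summable μ) (ts : Summable τ) : Summable (conv μ τ) := by
  have hu := conv_uncurry_summable h0 t0 hs ts
  have := (summable_prod_of_nonneg
      (f := fun p : G × G => μ p.2 * τ (p.2⁻¹ * p.1)) (fun p => mul_nonneg (h0 _) (t0 _))).mp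
      (hu.prod_symm.congr (by intro p; rfl))
  exact this.2.congr (fun y => rfl)

lemma conv_tsum (h0 : ∀ x, 0 ≤ μ x) (t0 : ∀ x, 0 ≤ τ x)
    (hs : Summable μ) (ts : Summable τ) :
    ∑' y, conv μ τ y = (∑' x, μ x) * (∑' x, τ x) := by
  have hu := conv_uncurry_summable h0 t0 hs ts
  have h1 : ∀ x : G, Summable (fun y => μ x * τ (x⁻¹ * y)) := fun x =>
    ((Equiv.mulLeft x⁻¹).summable_iff.mpr ts).mul_left (μ x)
  have h2 : ∀ y : G, Summable (fun x => μ x * τ (x⁻¹ * y)) :=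
    conv_slice_summable h0 t0 hs ts
  have := Summable.tsum_comm' (f := fun x y => μ x * τ (x⁻¹ * y)) hu h1 h2
  calc ∑' y, conv μ τ y = ∑' (y) (x), μ x * τ (x⁻¹ * y) := rfl
    _ = ∑' (x) (y), μ x * τ (x⁻¹ * y) := this
    _ = ∑' x, μ x * ∑' z, τ z := by
        refine tsum_congr (fun x => ?_)
        rw [tsum_mul_left, tsum_translate' τ x]
    _ = (∑' x, μ x) * (∑' x, τ x) := Summable.tsum_mul_right _ hs

lemma IsProb.conv (h : IsProb μ) (t : IsProb τ) : IsProb (conv μ τ) := by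
  refine ⟨conv_nonneg h.1 t.1, ?_⟩
  rw [conv_tsum h.1 t.1 h.summable t.summable, h.2, t.2, one_mul]

end basic

set_option linter.unusedSectionVars false

section convpow
variable {G : Type*} [Group G] {μ τ : G → ℝ}

lemma delta_isProb : IsProb (fun x : G => if x = 1 then (1:ℝ) else 0) := by
  refine ⟨fun x => by positivity, ?_⟩
  exact tsum_ite_eq (1 : G) (fun _ => (1:ℝ))

lemma conv_delta (f : G → ℝ) : conv f (fun x => if x = 1 then (1:ℝ) else 0) = f := by
  funext y
  show ∑' x, f x * (if x⁻¹ * y = 1 then (1:ℝ) else 0) = f y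
  rw [tsum_eq_single y]
  · simp
  · intro x hx
    rw [if_neg (fun h => hx (by rwa [inv_mul_eq_one] at h)), mul_zero]

lemma delta_conv (f : G → ℝ) : conv (fun x => if x = 1 then (1:ℝ) else 0) f = f := by
  funext y
  show ∑' x, (if x = 1 then (1:ℝ) else 0) * f (x⁻¹ * y) = f y
  rw [tsum_eq_single 1]
  · simp
  · intro x hx
    rw [if_neg hx, zero_mul]

lemma isProb_convPow (h : IsProb μ) (n : ℕ) : IsProb (convPow μ n) := by
  induction n with
  | zero => exact delta_isProb
  | succ n ih => exact ih.conv h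

lemma conv_assoc {f g h : G → ℝ} (f0 : ∀ x, 0 ≤ f x) (g0 : ∀ x, 0 ≤ g x) (h0 : ∀ x, 0 ≤ h x)
    (fs : Summable f) (gs : Summable g) (hs : Summable h) :
    conv (conv f g) h = conv f (conv g h) := by
  funext y
  have H := ∑' z, h z
  set Hs := ∑' z, h z with hHs
  have hH0 : 0 ≤ Hs := tsum_nonneg h0
  have hble : ∀ z, h z ≤ Hs := nonneg_le_tsum h0 hs
  have key1 : ∀ x : G, Summable (fun z => (f x * g (x⁻¹ * z)) * h (z⁻¹ * y)) := by
    intro x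
    refine Summable.of_nonneg_of_le
      (fun z => mul_nonneg (mul_nonneg (f0 x) (g0 _)) (h0 _)) (fun z => ?_)
      ((((Equiv.mulLeft x⁻¹).summable_iff.mpr gs).mul_left (f x)).mul_right Hs)
    exact mul_le_mul_of_nonneg_left (hble _) (mul_nonneg (f0 x) (g0 _))
  have key2 : ∀ z : G, Summable (fun x => (f x * g (x⁻¹ * z)) * h (z⁻¹ * y)) :=
    fun z => (conv_slice_summable f0 g0 fs gs z).mul_right _
  have inner_le : ∀ x : G, ∑' z, (f x * g (x⁻¹ * z)) * h (z⁻¹ * y)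
      ≤ f x * ((∑' w, g w) * Hs) := by
    intro x
    have : ∑' z, (f x * g (x⁻¹ * z)) * Hs = f x * ((∑' w, g w) * Hs) := by
      rw [tsum_mul_right, tsum_mul_left, tsum_translate' g x, mul_assoc]
    rw [← this]
    refine Summable.tsum_le_tsum (fun z => ?_) (key1 x)
      ((((Equiv.mulLeft x⁻¹).summable_iff.mpr gs).mul_left (f x)).mul_right Hs)
    exact mul_le_mul_of_nonneg_left (hble _) (mul_nonneg (f0 x) (g0 _))
  have hu : Summable (fun p : G × G => (f p.1 * g (p.1⁻¹ * p.2)) * h (p.2⁻¹ * y)) := by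
    rw [summable_prod_of_nonneg
      (fun p => mul_nonneg (mul_nonneg (f0 _) (g0 _)) (h0 _))]
    refine ⟨fun x => key1 x, ?_⟩
    refine Summable.of_nonneg_of_le
      (fun x => tsum_nonneg (fun z => mul_nonneg (mul_nonneg (f0 _) (g0 _)) (h0 _)))
      (fun x => inner_le x) (fs.mul_right _)
  have comm := Summable.tsum_comm' (f := fun x z => (f x * g (x⁻¹ * z)) * h (z⁻¹ * y)) hu key1 key2
  calc conv (conv f g) h y
      = ∑' z, (∑' x, f x * g (x⁻¹ * z)) * h (z⁻¹ * y) := rfl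
    _ = ∑' (z) (x), (f x * g (x⁻¹ * z)) * h (z⁻¹ * y) := by
        exact tsum_congr (fun z => (tsum_mul_right).symm)
    _ = ∑' (x) (z), (f x * g (x⁻¹ * z)) * h (z⁻¹ * y) := comm
    _ = ∑' x, f x * ((conv g h) (x⁻¹ * y)) := by
        refine tsum_congr (fun x => ?_)
        have : ∀ z, (f x * g (x⁻¹ * z)) * h (z⁻¹ * y)
            = f x * (g (x⁻¹ * z) * h (z⁻¹ * y)) := fun z => by ring
        rw [tsum_congr this, tsum_mul_left]
        congr 1
        rw [← tsum_translate (fun z => g (x⁻¹ * z) * h (z⁻¹ * y)) x]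
        refine tsum_congr (fun w => ?_)
        congr 1
        · congr 1; group
        · congr 1; group
    _ = conv f (conv g h) y := rfl

lemma convPow_add (h : IsProb μ) (a b : ℕ) :
    convPow μ (a + b) = conv (convPow μ a) (convPow μ b) := by
  induction b with
  | zero => simp [convPow, conv_delta]
  | succ b ih =>
    have ha := isProb_convPow h a
    have hb := isProb_convPow h b
    show conv (convPow μ (a+b)) μ = _
    rw [ih, conv_assoc ha.1 hb.1 h.1 ha.summable hb.summable h.summable]
    rfl

lemma convPow_one (h : IsProb μ) : convPow μ 1 = μ := by
  show conv _ μ = μ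
  exact delta_conv μ

end convpow

section cs
variable {ι : Type*}

lemma summable_mul_of_sq {f g : ι → ℝ} (hf : Summable (fun x => f x ^ 2))
    (hg : Summable (fun x => g x ^ 2)) : Summable (fun x => f x * g x) := by
  refine Summable.of_abs (Summable.of_nonneg_of_le (fun x => abs_nonneg _) (fun x => ?_)
    (((hf.add hg).div_const 2)))
  have := abs_mul (f x) (g x)
  nlinarith [sq_abs (f x), sq_abs (g x), sq_nonneg (|f x| - |g x|), abs_nonneg (f x),
    abs_nonneg (g x)]

lemma abs_tsum_mul_le_sqrt {f g : ι → ℝ} (hf : Summable (fun x => f x ^ 2))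
    (hg : Summable (fun x => g x ^ 2)) :
    |∑' x, f x * g x| ≤ Real.sqrt (∑' x, f x ^ 2) * Real.sqrt (∑' x, g x ^ 2) := by
  have habs : Summable (fun x => |f x * g x|) :=
    (summable_mul_of_sq hf hg).abs
  have h1 : |∑' x, f x * g x| ≤ ∑' x, |f x| * |g x| := by
    have := norm_tsum_le_tsum_norm (f := fun x => f x * g x)
      (habs.congr (fun i => (Real.norm_eq_abs _).symm))
    simpa [Real.norm_eq_abs] using this
  refine h1.trans ?_
  refine Summable.tsum_le_of_sum_le (habs.congr (fun i => abs_mul _ _)) (fun s => ?_)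
  refine (Real.sum_mul_le_sqrt_mul_sqrt s _ _).trans ?_
  have m1 : ∑ x ∈ s, |f x| ^ 2 ≤ ∑' x, f x ^ 2 := by
    simp only [sq_abs]
    exact Summable.sum_le_tsum s (fun i _ => sq_nonneg _) hf
  have m2 : ∑ x ∈ s, |g x| ^ 2 ≤ ∑' x, g x ^ 2 := by
    simp only [sq_abs]
    exact Summable.sum_le_tsum s (fun i _ => sq_nonneg _) hg
  exact mul_le_mul (Real.sqrt_le_sqrt m1) (Real.sqrt_le_sqrt m2) (Real.sqrt_nonneg _)
    (Real.sqrt_nonneg _)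

end cs


section symm
variable {G : Type*} [Group G] {μ : G → ℝ}

lemma symm_convPow (h : IsProb μ) (hsymm : MeasSymm μ) (n : ℕ) :
    MeasSymm (convPow μ n) := by
  induction n with
  | zero => intro x; show (if x⁻¹ = 1 then (1:ℝ) else 0) = (if x = 1 then (1:ℝ) else 0); simp [inv_eq_one]
  | succ n ih =>
    intro y
    have hform : convPow μ (n + 1) = conv μ (convPow μ n) := by
      have := convPow_add h 1 n
      rwa [convPow_one h, Nat.add_comm 1 n] at this
    have lhs : convPow μ (n+1) y⁻¹ = ∑' x, μ x * convPow μ n (y * x⁻¹) := by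
      rw [hform]
      show ∑' x, μ x * convPow μ n (x⁻¹ * y⁻¹) = _
      rw [← (Equiv.inv G).tsum_eq (fun x => μ x * convPow μ n (x⁻¹ * y⁻¹))]
      refine tsum_congr (fun x => ?_)
      show μ x⁻¹ * convPow μ n (x⁻¹⁻¹ * y⁻¹) = _
      rw [hsymm, inv_inv]
      congr 1
      rw [← ih (x * y⁻¹)]
      congr 1
      group
    have rhs : convPow μ (n+1) y = ∑' x, μ x * convPow μ n (y * x⁻¹) := by
      show ∑' x, convPow μ n x * μ (x⁻¹ * y) = _
      rw [← ((Equiv.inv G).trans (Equiv.mulLeft y)).tsum_eq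
        (fun x => convPow μ n x * μ (x⁻¹ * y))]
      refine tsum_congr (fun w => ?_)
      show convPow μ n (y * w⁻¹) * μ ((y * w⁻¹)⁻¹ * y) = _
      rw [mul_comm]
      congr 1
      · congr 1; group
    rw [lhs, rhs]

lemma convPow_sq_summable (h : IsProb μ) (n : ℕ) :
    Summable (fun x => convPow μ n x ^ 2) := by
  have hp := isProb_convPow h n
  refine Summable.of_nonneg_of_le (fun x => sq_nonneg _) (fun x => ?_) hp.summable
  nlinarith [hp.1 x, hp.le_one x]

lemma tsum_sq_eq (h : IsProb μ) (hsymm : MeasSymm μ) (n : ℕ) :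
    ∑' x, convPow μ n x ^ 2 = convPow μ (n + n) 1 := by
  rw [convPow_add h n n]
  show _ = ∑' x, convPow μ n x * convPow μ n (x⁻¹ * 1)
  refine tsum_congr (fun x => ?_)
  rw [mul_one, symm_convPow h hsymm n, sq]

lemma cross_eq (h : IsProb μ) (hsymm : MeasSymm μ) (n : ℕ) (g : G) :
    ∑' x, convPow μ n (g⁻¹ * x) * convPow μ n x = convPow μ (n + n) g := by
  rw [convPow_add h n n]
  show _ = ∑' x, convPow μ n x * convPow μ n (x⁻¹ * g)
  refine tsum_congr (fun x => ?_)
  rw [mul_comm]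
  congr 1
  rw [← symm_convPow h hsymm n (x⁻¹ * g)]
  congr 1
  group

lemma cross_eq2 (h : IsProb μ) (hsymm : MeasSymm μ) (n : ℕ) (a b : G) :
    ∑' z, convPow μ n (a⁻¹ * z) * convPow μ n (b⁻¹ * z) = convPow μ (n + n) (b⁻¹ * a) := by
  have e := (Equiv.mulLeft b).tsum_eq
    (fun z => convPow μ n (a⁻¹ * z) * convPow μ n (b⁻¹ * z))
  simp only [Equiv.coe_mulLeft] at e
  rw [← e]
  have : ∀ w : G, convPow μ n (a⁻¹ * (b * w)) * convPow μ n (b⁻¹ * (b * w))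
      = convPow μ n ((b⁻¹*a)⁻¹ * w) * convPow μ n w := by
    intro w
    congr 1
    · congr 1; group
    · congr 1; group
  rw [tsum_congr this]
  exact cross_eq h hsymm n (b⁻¹ * a)

end symm

section quant
variable {G : Type*} [Group G] {μ : G → ℝ}

lemma sq_summable_shift (h : IsProb μ) (n : ℕ) (a : G) :
    Summable (fun z => convPow μ n (a⁻¹ * z) ^ 2) := by
  have := ((Equiv.mulLeft a⁻¹).summable_iff (f := fun z => convPow μ n z ^ 2)).mpr
    (convPow_sq_summable h n)
  exact this.congr (fun z => rfl)

lemma tsum_sq_shift (h : IsProb μ) (hsymm : MeasSymm μ) (n : ℕ) (a : G) :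
    ∑' z, convPow μ n (a⁻¹ * z) ^ 2 = convPow μ (n + n) 1 := by
  have e := (Equiv.mulLeft a⁻¹).tsum_eq (fun z => convPow μ n z ^ 2)
  simp only [Equiv.coe_mulLeft] at e
  rw [e]
  exact tsum_sq_eq h hsymm n

lemma cross_summable (h : IsProb μ) (n : ℕ) (a b : G) :
    Summable (fun z => convPow μ n (a⁻¹ * z) * convPow μ n (b⁻¹ * z)) :=
  summable_mul_of_sq (sq_summable_shift h n a) (sq_summable_shift h n b)

lemma diff_sq_summable (h : IsProb μ) (n : ℕ) (g : G) :
    Summable (fun z => (convPow μ n (g⁻¹ * z) - convPow μ n z) ^ 2) := by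
  have hA := sq_summable_shift h n g
  have hB := convPow_sq_summable h n
  have hC : Summable (fun z => convPow μ n (g⁻¹ * z) * convPow μ n z) :=
    summable_mul_of_sq (sq_summable_shift h n g) hB
  refine ((hA.add hB).sub (hC.mul_left 2)).congr (fun z => ?_)
  ring

lemma diff_sq_eq (h : IsProb μ) (hsymm : MeasSymm μ) (n : ℕ) (g : G) :
    ∑' z, (convPow μ n (g⁻¹ * z) - convPow μ n z) ^ 2
      = 2 * convPow μ (n + n) 1 - 2 * convPow μ (n + n) g := by
  have hA := sq_summable_shift h n g
  have hB := convPow_sq_summable h n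
  have hC : Summable (fun z => convPow μ n (g⁻¹ * z) * convPow μ n z) :=
    summable_mul_of_sq hA hB
  have hexp : ∀ z : G, (convPow μ n (g⁻¹ * z) - convPow μ n z) ^ 2
      = (convPow μ n (g⁻¹ * z) ^ 2 + convPow μ n z ^ 2)
        - 2 * (convPow μ n (g⁻¹ * z) * convPow μ n z) := fun z => by ring
  rw [tsum_congr hexp, Summable.tsum_sub (hA.add hB) (hC.mul_left 2), Summable.tsum_add hA hB,
    tsum_mul_left, tsum_sq_shift h hsymm n g, tsum_sq_eq h hsymm n,
    cross_eq h hsymm n g]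
  ring

lemma pointwise_bound (h : IsProb μ) (hsymm : MeasSymm μ) (n : ℕ) (g x : G) :
    |convPow μ (n + n) (x⁻¹ * g) - convPow μ (n + n) x⁻¹|
      ≤ Real.sqrt (2 * convPow μ (n + n) 1 - 2 * convPow μ (n + n) g)
        * Real.sqrt (convPow μ (n + n) 1) := by
  have hA := sq_summable_shift h n g
  have hB := convPow_sq_summable h n
  have hX := sq_summable_shift h n x
  have hd : convPow μ (n + n) (x⁻¹ * g) - convPow μ (n + n) x⁻¹
      = ∑' z, (convPow μ n (g⁻¹ * z) - convPow μ n z) * convPow μ n (x⁻¹ * z) := by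
    have h1 : ∀ z : G, (convPow μ n (g⁻¹ * z) - convPow μ n z) * convPow μ n (x⁻¹ * z)
        = convPow μ n (g⁻¹ * z) * convPow μ n (x⁻¹ * z)
          - convPow μ n ((1:G)⁻¹ * z) * convPow μ n (x⁻¹ * z) := by
      intro z; rw [inv_one, one_mul, sub_mul]
    rw [tsum_congr h1, Summable.tsum_sub (cross_summable h n g x) (cross_summable h n 1 x),
      cross_eq2 h hsymm n g x, cross_eq2 h hsymm n 1 x, mul_one]
  rw [hd]
  have hds := diff_sq_summable h n g
  have := abs_tsum_mul_le_sqrt hds hX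
  rwa [diff_sq_eq h hsymm n g, tsum_sq_shift h hsymm n x] at this

lemma odd_form (h : IsProb μ) (n : ℕ) (y : G) :
    convPow μ (n + 1) y = ∑' x, μ x * convPow μ n (x⁻¹ * y) := by
  have := convPow_add h 1 n
  rw [convPow_one h] at this
  rw [Nat.add_comm n 1, this]
  rfl

lemma odd_diff_bound (h : IsProb μ) (hsymm : MeasSymm μ) (n : ℕ) (g : G) :
    |convPow μ (n + n + 1) g - convPow μ (n + n + 1) 1|
      ≤ Real.sqrt (2 * convPow μ (n + n) 1 - 2 * convPow μ (n + n) g)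
        * Real.sqrt (convPow μ (n + n) 1) := by
  set K := Real.sqrt (2 * convPow μ (n + n) 1 - 2 * convPow μ (n + n) g)
    * Real.sqrt (convPow μ (n + n) 1) with hK
  have hK0 : 0 ≤ K := mul_nonneg (Real.sqrt_nonneg _) (Real.sqrt_nonneg _)
  have hp2n := isProb_convPow h (n + n)
  have hsum1 : Summable (fun x => μ x * convPow μ (n+n) (x⁻¹ * g)) :=
    conv_slice_summable h.1 hp2n.1 h.summable hp2n.summable g
  have hsum2 : Summable (fun x => μ x * convPow μ (n+n) (x⁻¹ * 1)) :=
    conv_slice_summable h.1 hp2n.1 h.summable hp2n.summable 1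
  have hdiff : convPow μ (n + n + 1) g - convPow μ (n + n + 1) 1
      = ∑' x, μ x * (convPow μ (n+n) (x⁻¹ * g) - convPow μ (n+n) x⁻¹) := by
    rw [odd_form h (n+n) g, odd_form h (n+n) 1, ← Summable.tsum_sub hsum1 hsum2]
    refine tsum_congr (fun x => ?_)
    rw [mul_one, mul_sub]
  rw [hdiff]
  have hb : ∀ x : G, |μ x * (convPow μ (n+n) (x⁻¹ * g) - convPow μ (n+n) x⁻¹)|
      ≤ μ x * K := by
    intro x
    rw [abs_mul, abs_of_nonneg (h.1 x)]
    exact mul_le_mul_of_nonneg_left (pointwise_bound h hsymm n g x) (h.1 x)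
  have habs : Summable (fun x => |μ x * (convPow μ (n+n) (x⁻¹ * g) - convPow μ (n+n) x⁻¹)|) :=
    Summable.of_nonneg_of_le (fun x => abs_nonneg _) hb (h.summable.mul_right K)
  have h1 : |∑' x, μ x * (convPow μ (n+n) (x⁻¹ * g) - convPow μ (n+n) x⁻¹)|
      ≤ ∑' x, |μ x| * |convPow μ (n+n) (x⁻¹ * g) - convPow μ (n+n) x⁻¹| := by
    have := norm_tsum_le_tsum_norm
      (f := fun x => μ x * (convPow μ (n+n) (x⁻¹ * g) - convPow μ (n+n) x⁻¹))
      (habs.congr (fun i => (Real.norm_eq_abs _).symm))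
    simpa [Real.norm_eq_abs] using this
  refine h1.trans ?_
  have h2 : ∑' x, |μ x| * |convPow μ (n+n) (x⁻¹ * g) - convPow μ (n+n) x⁻¹|
      ≤ ∑' x, μ x * K := by
    refine Summable.tsum_le_tsum (fun x => ?_) (habs.congr (fun i => abs_mul _ _))
      (h.summable.mul_right K)
    rw [← abs_mul]
    exact hb x
  refine h2.trans ?_
  rw [tsum_mul_right, h.2, one_mul]

lemma supermult (h : IsProb μ) (a b : ℕ) :
    convPow μ a 1 * convPow μ b 1 ≤ convPow μ (a + b) 1 := by
  have ha := isProb_convPow h a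
  have hb := isProb_convPow h b
  rw [convPow_add h a b]
  show _ ≤ ∑' x, convPow μ a x * convPow μ b (x⁻¹ * 1)
  have := Summable.le_tsum (conv_slice_summable ha.1 hb.1 ha.summable hb.summable 1) 1
    (fun j _ => mul_nonneg (ha.1 j) (hb.1 _))
  simpa using this

lemma sup_bound (h : IsProb μ) (hsymm : MeasSymm μ) (a b : ℕ) (x : G) :
    convPow μ (a + b) x
      ≤ Real.sqrt (convPow μ (a + a) 1) * Real.sqrt (convPow μ (b + b) 1) := by
  have ha := isProb_convPow h a
  have hb := isProb_convPow h b
  have hsa := convPow_sq_summable h a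
  have hsb : Summable (fun z => convPow μ b (z⁻¹ * x) ^ 2) := by
    refine (((Equiv.inv G).trans (Equiv.mulLeft x)).summable_iff
      (f := fun z => convPow μ b (z⁻¹ * x) ^ 2)).mp ?_
    refine (convPow_sq_summable h b).congr (fun w => ?_)
    show convPow μ b w ^ 2 = convPow μ b ((x * w⁻¹)⁻¹ * x) ^ 2
    congr 2
    group
  have heq : ∑' z, convPow μ b (z⁻¹ * x) ^ 2 = convPow μ (b + b) 1 := by
    have e := ((Equiv.inv G).trans (Equiv.mulLeft x)).tsum_eq
      (fun z => convPow μ b (z⁻¹ * x) ^ 2)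
    rw [← e]
    have : ∀ w : G, convPow μ b ((((Equiv.inv G).trans (Equiv.mulLeft x)) w)⁻¹ * x) ^ 2
        = convPow μ b w ^ 2 := by
      intro w
      show convPow μ b ((x * w⁻¹)⁻¹ * x) ^ 2 = _
      congr 2
      group
    rw [tsum_congr this]
    exact tsum_sq_eq h hsymm b
  have hcs := abs_tsum_mul_le_sqrt hsa hsb
  rw [tsum_sq_eq h hsymm a, heq] at hcs
  calc convPow μ (a + b) x = ∑' z, convPow μ a z * convPow μ b (z⁻¹ * x) := by
        rw [convPow_add h a b]; rfl
    _ ≤ |∑' z, convPow μ a z * convPow μ b (z⁻¹ * x)| := le_abs_self _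
    _ ≤ _ := hcs

end quant


section mono
variable {G : Type*} [Group G] {μ : G → ℝ}

lemma summable_inv_shift (h : IsProb μ) : Summable (fun x : G => μ x⁻¹) :=
  (((Equiv.inv G).summable_iff (f := μ)).mpr h.summable).congr (fun x => rfl)

lemma tsum_inv_eq (h : IsProb μ) : ∑' x : G, μ x⁻¹ = 1 := by
  have e := (Equiv.inv G).tsum_eq μ
  simp only [Equiv.inv_apply] at e
  rw [e, h.2]

lemma even_step (h : IsProb μ) (hsymm : MeasSymm μ) (n : ℕ) :
    convPow μ ((n+1) + (n+1)) 1 ≤ convPow μ (n + n) 1 := by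
  set s := convPow μ (n + n) 1 with hs
  set t := convPow μ ((n+1) + (n+1)) 1 with ht
  have hs0 : 0 ≤ s := (isProb_convPow h (n+n)).1 1
  have ht0 : 0 ≤ t := (isProb_convPow h ((n+1)+(n+1))).1 1
  have hidx : (n+1) + (n+1) = (n + (n+1)) + 1 := by omega
  have hb : ∀ x : G, convPow μ (n + (n+1)) x ≤ Real.sqrt s * Real.sqrt t := by
    intro x
    have := sup_bound h hsymm n (n+1) x
    rwa [← hs, ← ht] at this
  have hform : t = ∑' x, convPow μ (n + (n+1)) x * μ (x⁻¹ * 1) := by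
    rw [ht, hidx]
    rfl
  have hpm := isProb_convPow h (n + (n+1))
  have hsummand : Summable (fun x => convPow μ (n + (n+1)) x * μ (x⁻¹ * 1)) :=
    conv_slice_summable hpm.1 h.1 hpm.summable h.summable 1
  have step : ∑' x, convPow μ (n + (n+1)) x * μ (x⁻¹ * 1)
      ≤ ∑' x, (Real.sqrt s * Real.sqrt t) * μ (x⁻¹ * 1) := by
    refine Summable.tsum_le_tsum (fun x => ?_) hsummand ?_
    · exact mul_le_mul_of_nonneg_right (hb x) (h.1 _)
    · refine ((summable_inv_shift h).congr (fun x => by rw [mul_one])).mul_left _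
  have hmu1 : ∑' x : G, μ (x⁻¹ * 1) = 1 := by
    rw [tsum_congr (fun x => by rw [mul_one]), tsum_inv_eq h]
  have hbound : t ≤ Real.sqrt s * Real.sqrt t := by
    calc t = ∑' x, convPow μ (n + (n+1)) x * μ (x⁻¹ * 1) := hform
      _ ≤ ∑' x, (Real.sqrt s * Real.sqrt t) * μ (x⁻¹ * 1) := step
      _ = Real.sqrt s * Real.sqrt t := by rw [tsum_mul_left, hmu1, mul_one]
  nlinarith [Real.sq_sqrt hs0, Real.sq_sqrt ht0, Real.sqrt_nonneg s, Real.sqrt_nonneg t,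
    sq_nonneg (Real.sqrt s - Real.sqrt t)]

lemma even_mono (h : IsProb μ) (hsymm : MeasSymm μ) {j k : ℕ} (hjk : j ≤ k) :
    convPow μ (k + k) 1 ≤ convPow μ (j + j) 1 := by
  induction k with
  | zero => have : j = 0 := by omega
            subst this; exact le_refl _
  | succ k ih =>
    by_cases hj : j ≤ k
    · exact (even_step h hsymm k).trans (ih hj)
    · have : j = k + 1 := by omega
      subst this; exact le_refl _

lemma even_pos (h : IsProb μ) (hsymm : MeasSymm μ) (n : ℕ) :
    0 < convPow μ (n + n) 1 := by
  have hp := isProb_convPow h n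
  have : ∃ x : G, 0 < convPow μ n x := by
    by_contra hall
    push_neg at hall
    have hzero : ∀ x : G, convPow μ n x = 0 := fun x => le_antisymm (hall x) (hp.1 x)
    have h1 := hp.2
    rw [tsum_congr hzero, tsum_zero] at h1
    norm_num at h1
  obtain ⟨x0, hx0⟩ := this
  have hle : convPow μ n x0 ^ 2 ≤ ∑' x, convPow μ n x ^ 2 :=
    Summable.le_tsum (convPow_sq_summable h n) x0 (fun j _ => sq_nonneg _)
  rw [tsum_sq_eq h hsymm n] at hle
  exact lt_of_lt_of_le (pow_pos hx0 2) hle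

lemma odd_exists (h : IsProb μ) (haper : IsAperiodic μ) :
    ∃ t : ℕ, 0 < convPow μ (2*t+1) 1 := by
  by_contra hno
  push_neg at hno
  have key : ∀ n : ℕ, 1 ≤ n → 0 < convPow μ n 1 → 2 ∣ n := by
    intro n _ hpos
    by_contra hdvd
    obtain ⟨t, ht⟩ : ∃ t, n = 2*t+1 := ⟨n/2, by omega⟩
    rw [ht] at hpos
    exact absurd hpos (not_lt.mpr (hno t))
  have := haper 2 key
  norm_num at this

lemma tendsto_of_parity {a : ℕ → ℝ} {l : ℝ}
    (he : Tendsto (fun n => a (n + n)) atTop (𝓝 l))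
    (ho : Tendsto (fun n => a (n + n + 1)) atTop (𝓝 l)) :
    Tendsto a atTop (𝓝 l) := by
  rw [Metric.tendsto_atTop] at he ho ⊢
  intro ε hε
  obtain ⟨N1, hN1⟩ := he ε hε
  obtain ⟨N2, hN2⟩ := ho ε hε
  refine ⟨2*(N1+N2)+2, fun n hn => ?_⟩
  rcases Nat.even_or_odd n with ⟨k, hk⟩ | ⟨k, hk⟩
  · have hkn : k + k = n := by omega
    have : N1 ≤ k := by omega
    have := hN1 k this
    rwa [hkn] at this
  · have hkn : k + k + 1 = n := by omega
    have : N2 ≤ k := by omega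
    have := hN2 k this
    rwa [hkn] at this

end mono







section final
variable {G : Type*} [Group G] {μ : G → ℝ}

lemma ratio_le_one (h : IsProb μ) (hsymm : MeasSymm μ) (n : ℕ) (g : G) :
    convPow μ (n + n) g ≤ convPow μ (n + n) 1 := by
  have := sup_bound h hsymm n n g
  rwa [Real.mul_self_sqrt ((isProb_convPow h (n+n)).1 1)] at this

lemma l2_formula (h : IsProb μ) (hsymm : MeasSymm μ) (n : ℕ) (g : G) :
    l2norm (ltrans g (xi μ n) - xi μ n)
      = Real.sqrt (2 - 2 * (convPow μ (n+n) g / convPow μ (n+n) 1)) := by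
  have hE : 0 < convPow μ (n+n) 1 := even_pos h hsymm n
  have hL : l2norm (convPow μ n) = Real.sqrt (convPow μ (n+n) 1) := by
    unfold l2norm
    rw [tsum_sq_eq h hsymm n]
  have hL0 : 0 < Real.sqrt (convPow μ (n+n) 1) := Real.sqrt_pos.mpr hE
  have hpt : ∀ x : G, (ltrans g (xi μ n) - xi μ n) x
      = (convPow μ n (g⁻¹ * x) - convPow μ n x) / Real.sqrt (convPow μ (n+n) 1) := by
    intro x
    show xi μ n (g⁻¹ * x) - xi μ n x = _
    unfold xi
    rw [hL, sub_div]
  unfold l2norm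
  rw [tsum_congr (fun x => by rw [hpt x, div_pow,
    Real.sq_sqrt (le_of_lt hE)]), tsum_div_const, diff_sq_eq h hsymm n g]
  congr 1
  field_simp

lemma key_tendsto_sqrt {r : ℕ → ℝ} (h2 : Tendsto r atTop (𝓝 1)) :
    Tendsto (fun n => Real.sqrt (2 - 2 * r n)) atTop (𝓝 0) := by
  have h3 : Tendsto (fun n => 2 - 2 * r n) atTop (𝓝 0) := by
    have h5 := tendsto_const_nhds (x := (2:ℝ)) (f := atTop (α := ℕ)) |>.sub (h2.const_mul 2)
    simpa using h5
  simpa using h3.sqrt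

theorem stmt2' (h : IsProb μ) (hsymm : MeasSymm μ) (haper : IsAperiodic μ) :
    Amu μ = {g : G | Tendsto (fun n => l2norm (ltrans g (xi μ n) - xi μ n)) atTop (𝓝 0)} := by
  ext g
  simp only [Amu, Set.mem_setOf_eq]
  have hE : ∀ n : ℕ, 0 < convPow μ (n+n) 1 := even_pos h hsymm
  constructor
  · intro hg
    have hdouble : Tendsto (fun n : ℕ => n + n) atTop atTop :=
      tendsto_atTop_mono (fun n => Nat.le_add_left n n) tendsto_id
    have h2 : Tendsto (fun n => convPow μ (n+n) g / convPow μ (n+n) 1) atTop (𝓝 1) :=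
      hg.comp hdouble
    exact (key_tendsto_sqrt h2).congr (fun n => (l2_formula h hsymm n g).symm)
  · intro hg
    have hr1 : ∀ n : ℕ, convPow μ (n+n) g / convPow μ (n+n) 1 ≤ 1 :=
      fun n => (div_le_one (hE n)).mpr (ratio_le_one h hsymm n g)
    have hs' : Tendsto (fun n => Real.sqrt (2 - 2 * (convPow μ (n+n) g / convPow μ (n+n) 1)))
        atTop (𝓝 0) := hg.congr (fun n => l2_formula h hsymm n g)
    have key : Tendsto (fun n => 2 - 2 * (convPow μ (n+n) g / convPow μ (n+n) 1))
        atTop (𝓝 0) := by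
      have hsq := hs'.pow 2
      norm_num at hsq
      refine hsq.congr (fun n => ?_)
      rw [Real.sq_sqrt (by nlinarith [hr1 n])]
    have he : Tendsto (fun n => convPow μ (n+n) g / convPow μ (n+n) 1) atTop (𝓝 1) := by
      have h4 := (tendsto_const_nhds (x := (2:ℝ)) (f := atTop (α := ℕ)) |>.sub key).div_const 2
      norm_num at h4
      refine h4.congr (fun n => ?_)
      ring
    obtain ⟨t, hct⟩ := odd_exists h haper
    have hodd_lower : ∀ n : ℕ, t ≤ n →
        convPow μ (2*t+1) 1 * convPow μ (n+n) 1 ≤ convPow μ (n+n+1) 1 := by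
      intro n hn
      have idx : (2*t+1) + ((n-t)+(n-t)) = n+n+1 := by omega
      have hsm := supermult h (2*t+1) ((n-t)+(n-t))
      rw [idx] at hsm
      have hmono := even_mono h hsymm (j := n - t) (k := n) (by omega)
      calc convPow μ (2*t+1) 1 * convPow μ (n+n) 1
          ≤ convPow μ (2*t+1) 1 * convPow μ ((n-t)+(n-t)) 1 :=
            mul_le_mul_of_nonneg_left hmono (le_of_lt hct)
        _ ≤ convPow μ (n+n+1) 1 := hsm
    have hopos : ∀ n : ℕ, t ≤ n → 0 < convPow μ (n+n+1) 1 :=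
      fun n hn => lt_of_lt_of_le (mul_pos hct (hE n)) (hodd_lower n hn)
    have hobound : ∀ n : ℕ, t ≤ n →
        |convPow μ (n+n+1) g / convPow μ (n+n+1) 1 - 1|
          ≤ Real.sqrt (2 - 2 * (convPow μ (n+n) g / convPow μ (n+n) 1))
            / convPow μ (2*t+1) 1 := by
      intro n hn
      have hp1 := hopos n hn
      have hob := odd_diff_bound h hsymm n g
      have hr0 : 0 ≤ 2 - 2 * (convPow μ (n+n) g / convPow μ (n+n) 1) := by
        nlinarith [hr1 n]
      have hfact : Real.sqrt (2 * convPow μ (n+n) 1 - 2 * convPow μ (n+n) g)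
            * Real.sqrt (convPow μ (n+n) 1)
          = Real.sqrt (2 - 2 * (convPow μ (n+n) g / convPow μ (n+n) 1))
            * convPow μ (n+n) 1 := by
        have h1 : 2 * convPow μ (n+n) 1 - 2 * convPow μ (n+n) g
            = (2 - 2 * (convPow μ (n+n) g / convPow μ (n+n) 1)) * convPow μ (n+n) 1 := by
          have hEne : convPow μ (n+n) 1 ≠ 0 := ne_of_gt (hE n)
          field_simp
        rw [h1, Real.sqrt_mul hr0, mul_assoc,
          Real.mul_self_sqrt (le_of_lt (hE n))]
      rw [hfact] at hob
      have habs : |convPow μ (n+n+1) g / convPow μ (n+n+1) 1 - 1|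
          = |convPow μ (n+n+1) g - convPow μ (n+n+1) 1| / convPow μ (n+n+1) 1 := by
        rw [div_sub_one (ne_of_gt hp1), abs_div, abs_of_pos hp1]
      rw [habs]
      have hd := div_le_div₀
        (mul_nonneg (Real.sqrt_nonneg _) (le_of_lt (hE n))) hob
        (mul_pos hct (hE n)) (hodd_lower n hn)
      refine hd.trans ?_
      rw [mul_comm (Real.sqrt _) (convPow μ (n+n) 1),
        mul_comm (convPow μ (2*t+1) 1) (convPow μ (n+n) 1),
        mul_div_mul_left _ _ (ne_of_gt (hE n))]
    have hgo : Tendsto (fun n => Real.sqrt (2 - 2 * (convPow μ (n+n) g / convPow μ (n+n) 1))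
        / convPow μ (2*t+1) 1) atTop (𝓝 0) := by
      simpa using hs'.div_const (convPow μ (2*t+1) 1)
    have habs0 : Tendsto (fun n => |convPow μ (n+n+1) g / convPow μ (n+n+1) 1 - 1|)
        atTop (𝓝 0) := by
      refine squeeze_zero' (Filter.Eventually.of_forall (fun n => abs_nonneg _)) ?_ hgo
      exact Filter.eventually_atTop.mpr ⟨t, hobound⟩
    have ho : Tendsto (fun n => convPow μ (n+n+1) g / convPow μ (n+n+1) 1) atTop (𝓝 1) := by
      rw [← tendsto_sub_nhds_zero_iff]
      exact (tendsto_zero_iff_abs_tendsto_zero _).mpr habs0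
    exact tendsto_of_parity he ho
  
end final


theorem stmt2 {G : Type*} [Group G] [Group.FG G] (μ : G → ℝ)
    (hprob : IsProb μ) (hsymm : MeasSymm μ) (haper : IsAperiodic μ)
    (hgen : GeneratingSupport μ) :
    Amu μ = {g : G | Tendsto (fun n => l2norm (ltrans g (xi μ n) - xi μ n)) atTop (𝓝 0)} :=
  stmt2' hprob hsymm haper
end

section
/- The subgroup A_μ = { g ∈ G : lim_{n→∞} μ^{*n}(g)/μ^{*n}(e) = 1 } is amenable. -/
open Filter Topology
open scoped Classical

section basics
variable {G : Type*} [Group G] {μ : G → ℝ} (hprob : IsProb μ)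

lemma mu_le_one (hprob : IsProb μ) (x : G) : μ x ≤ 1 := by
  have hs : Summable μ := by
    by_contra h
    have h2 := hprob.2
    rw [tsum_eq_zero_of_not_summable h] at h2
    exact one_ne_zero h2.symm
  calc μ x ≤ ∑' y, μ y := Summable.le_tsum hs x (fun j _ => hprob.1 j)
  _ = 1 := hprob.2

lemma convPow_nonneg (hprob : IsProb μ) : ∀ n x, 0 ≤ convPow μ n x := by
  intro n
  induction n with
  | zero => intro x; simp [convPow]; positivity
  | succ n ih =>
    intro x
    exact tsum_nonneg fun y => mul_nonneg (ih y) (hprob.1 _)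

lemma convPow_step_summable (hprob : IsProb μ) {n : ℕ} (hs : Summable (convPow μ n)) (y : G) :
    Summable (fun x => convPow μ n x * μ (x⁻¹ * y)) := by
  refine hs.of_nonneg_of_le (fun x => mul_nonneg (convPow_nonneg hprob n x) (hprob.1 _)) ?_
  intro x
  calc convPow μ n x * μ (x⁻¹ * y) ≤ convPow μ n x * 1 :=
        mul_le_mul_of_nonneg_left (mu_le_one hprob _) (convPow_nonneg hprob n x)
  _ = convPow μ n x := mul_one _

/-- main joint induction -/
lemma convPow_summable_tsum (hprob : IsProb μ) :
    ∀ n, Summable (convPow μ n) ∧ ∑' x, convPow μ n x = 1 := by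
  intro n
  induction n with
  | zero =>
    constructor
    · apply summable_of_ne_finset_zero (s := {1})
      intro x hx; simp at hx; simp [convPow, hx]
    · simp [convPow]
  | succ n ih =>
    obtain ⟨hs, ht⟩ := ih
    have hof : ∀ y, ENNReal.ofReal (convPow μ (n+1) y)
        = ∑' x, ENNReal.ofReal (convPow μ n x) * ENNReal.ofReal (μ (x⁻¹ * y)) := by
      intro y
      show ENNReal.ofReal (conv (convPow μ n) μ y) = _
      rw [conv, ENNReal.ofReal_tsum_of_nonneg
        (fun x => mul_nonneg (convPow_nonneg hprob n x) (hprob.1 _))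
        (convPow_step_summable hprob hs y)]
      exact tsum_congr fun x => ENNReal.ofReal_mul (convPow_nonneg hprob n x)
    have hofmu : ∑' x : G, ENNReal.ofReal (μ x) = 1 := by
      rw [← ENNReal.ofReal_tsum_of_nonneg hprob.1 (by
        by_contra h
        have h2 := hprob.2
        rw [tsum_eq_zero_of_not_summable h] at h2
        exact one_ne_zero h2.symm), hprob.2, ENNReal.ofReal_one]
    have hofn : ∑' x : G, ENNReal.ofReal (convPow μ n x) = 1 := by
      rw [← ENNReal.ofReal_tsum_of_nonneg (convPow_nonneg hprob n) hs, ht, ENNReal.ofReal_one]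
    have key : ∑' y, ENNReal.ofReal (convPow μ (n+1) y) = 1 := by
      calc ∑' y, ENNReal.ofReal (convPow μ (n+1) y)
          = ∑' (y) (x), ENNReal.ofReal (convPow μ n x) * ENNReal.ofReal (μ (x⁻¹ * y)) :=
            tsum_congr hof
        _ = ∑' (x) (y), ENNReal.ofReal (convPow μ n x) * ENNReal.ofReal (μ (x⁻¹ * y)) :=
            ENNReal.tsum_comm
        _ = ∑' x, ENNReal.ofReal (convPow μ n x) * ∑' y, ENNReal.ofReal (μ (x⁻¹ * y)) := by
            exact tsum_congr fun x => ENNReal.tsum_mul_left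
        _ = ∑' x, ENNReal.ofReal (convPow μ n x) * 1 := by
            refine tsum_congr fun x => ?_
            congr 1
            calc ∑' y, ENNReal.ofReal (μ (x⁻¹ * y))
                = ∑' y, ENNReal.ofReal (μ y) :=
                  (Equiv.mulLeft x⁻¹).tsum_eq (fun y => ENNReal.ofReal (μ y))
              _ = 1 := hofmu
        _ = 1 := by simpa using hofn
    have hsum : Summable (convPow μ (n+1)) := by
      have := ENNReal.summable_toReal (f := fun y => ENNReal.ofReal (convPow μ (n+1) y))
        (by rw [key]; exact ENNReal.one_ne_top)
      refine this.congr fun y => ?_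
      exact ENNReal.toReal_ofReal (convPow_nonneg hprob _ y)
    refine ⟨hsum, ?_⟩
    have := ENNReal.ofReal_tsum_of_nonneg (convPow_nonneg hprob (n+1)) hsum
    rw [key] at this
    exact ENNReal.ofReal_eq_one.mp this

end basics

section semigroup
variable {G : Type*} [Group G] {μ : G → ℝ}

/-- abbreviation for the ENNReal version -/
noncomputable def P (μ : G → ℝ) (n : ℕ) (x : G) : ENNReal := ENNReal.ofReal (convPow μ n x)

lemma P_succ (hprob : IsProb μ) (n : ℕ) (y : G) :
    P μ (n+1) y = ∑' x, P μ n x * ENNReal.ofReal (μ (x⁻¹ * y)) := by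
  show ENNReal.ofReal (conv (convPow μ n) μ y) = _
  rw [conv, ENNReal.ofReal_tsum_of_nonneg
    (fun x => mul_nonneg (convPow_nonneg hprob n x) (hprob.1 _))
    (convPow_step_summable hprob (convPow_summable_tsum hprob n).1 y)]
  exact tsum_congr fun x => ENNReal.ofReal_mul (convPow_nonneg hprob n x)

lemma P_zero (x : G) : P μ 0 x = if x = 1 then 1 else 0 := by
  by_cases h : x = 1 <;> simp [P, convPow, h]

lemma convPow_one_eq (hprob : IsProb μ) : convPow μ 1 = μ := by
  funext y
  show conv (convPow μ 0) μ y = μ y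
  rw [conv]
  rw [show (fun x => convPow μ 0 x * μ (x⁻¹ * y)) = fun x => if x = 1 then μ y else 0 by
    funext x; by_cases h : x = 1 <;> simp [convPow, h]]
  exact tsum_ite_eq 1 (fun _ => μ y)

lemma P_one (hprob : IsProb μ) (x : G) : P μ 1 x = ENNReal.ofReal (μ x) := by
  rw [P, convPow_one_eq hprob]

lemma P_add (hprob : IsProb μ) (m : ℕ) : ∀ n y, P μ (m + n) y = ∑' x, P μ m x * P μ n (x⁻¹ * y) := by
  intro n
  induction n with
  | zero =>
    intro y
    rw [show (fun x => P μ m x * P μ 0 (x⁻¹ * y)) = fun x => if x = y then P μ m y else 0 by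
      funext x
      by_cases h : x = y
      · simp [h, P_zero]
      · have : x⁻¹ * y ≠ 1 := fun hc => h (by
          have := congrArg (x * ·) hc; simpa [mul_assoc] using this.symm)
        simp [P_zero, this, h]]
    rw [tsum_ite_eq y (fun _ => P μ m y), Nat.add_zero]
  | succ n ih =>
    intro y
    have assoc : m + (n + 1) = (m + n) + 1 := by ring
    rw [assoc, P_succ hprob]
    calc ∑' x, P μ (m+n) x * ENNReal.ofReal (μ (x⁻¹ * y))
        = ∑' x, (∑' z, P μ m z * P μ n (z⁻¹ * x)) * ENNReal.ofReal (μ (x⁻¹ * y)) := by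
          exact tsum_congr fun x => by rw [ih x]
      _ = ∑' (x) (z), P μ m z * P μ n (z⁻¹ * x) * ENNReal.ofReal (μ (x⁻¹ * y)) := by
          exact tsum_congr fun x => ENNReal.tsum_mul_right.symm
      _ = ∑' (z) (x), P μ m z * (P μ n (z⁻¹ * x) * ENNReal.ofReal (μ (x⁻¹ * y))) := by
          rw [ENNReal.tsum_comm]
          exact tsum_congr fun z => tsum_congr fun x => mul_assoc _ _ _
      _ = ∑' z, P μ m z * ∑' x, P μ n (z⁻¹ * x) * ENNReal.ofReal (μ (x⁻¹ * y)) := by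
          exact tsum_congr fun z => ENNReal.tsum_mul_left
      _ = ∑' z, P μ m z * P μ (n+1) (z⁻¹ * y) := by
          refine tsum_congr fun z => ?_
          congr 1
          calc ∑' x, P μ n (z⁻¹ * x) * ENNReal.ofReal (μ (x⁻¹ * y))
              = ∑' u, P μ n (z⁻¹ * (z * u)) * ENNReal.ofReal (μ ((z * u)⁻¹ * y)) :=
                ((Equiv.mulLeft z).tsum_eq _).symm
            _ = ∑' u, P μ n u * ENNReal.ofReal (μ (u⁻¹ * (z⁻¹ * y))) := by
                refine tsum_congr fun u => ?_
                rw [show z⁻¹ * (z * u) = u by group, show (z * u)⁻¹ * y = u⁻¹ * (z⁻¹ * y) by group]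
            _ = P μ (n+1) (z⁻¹ * y) := (P_succ hprob n _).symm

lemma P_tsum (hprob : IsProb μ) (n : ℕ) : ∑' x, P μ n x = 1 := by
  simp only [P]
  rw [← ENNReal.ofReal_tsum_of_nonneg (convPow_nonneg hprob n) (convPow_summable_tsum hprob n).1,
    (convPow_summable_tsum hprob n).2, ENNReal.ofReal_one]

lemma P_symm (hprob : IsProb μ) (hsymm : MeasSymm μ) : ∀ n y, P μ n y⁻¹ = P μ n y := by
  intro n
  induction n with
  | zero =>
    intro y; rw [P_zero, P_zero]
    simp [inv_eq_one]
  | succ n ih =>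
    intro y
    calc P μ (n+1) y⁻¹ = ∑' x, P μ n x * ENNReal.ofReal (μ (x⁻¹ * y⁻¹)) := P_succ hprob n y⁻¹
      _ = ∑' u, P μ n (y⁻¹ * u⁻¹) * ENNReal.ofReal (μ ((y⁻¹ * u⁻¹)⁻¹ * y⁻¹)) := by
          exact (((Equiv.inv G).trans (Equiv.mulLeft y⁻¹)).tsum_eq
            (fun x => P μ n x * ENNReal.ofReal (μ (x⁻¹ * y⁻¹)))).symm
      _ = ∑' u, ENNReal.ofReal (μ u) * P μ n (u * y) := by
          refine tsum_congr fun u => ?_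
          rw [show (y⁻¹ * u⁻¹)⁻¹ * y⁻¹ = u by group]
          rw [show y⁻¹ * u⁻¹ = (u * y)⁻¹ by group, ih (u * y), mul_comm]
      _ = ∑' v, ENNReal.ofReal (μ v⁻¹) * P μ n (v⁻¹ * y) :=
          (((Equiv.inv G)).tsum_eq (fun u => ENNReal.ofReal (μ u) * P μ n (u * y))).symm
      _ = ∑' v, ENNReal.ofReal (μ v) * P μ n (v⁻¹ * y) :=
          tsum_congr fun v => by rw [hsymm v]
      _ = ∑' u, P μ 1 u * P μ n (u⁻¹ * y) := by
          exact tsum_congr fun u => by rw [P_one hprob]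
      _ = P μ (1 + n) y := (P_add hprob 1 n y).symm
      _ = P μ (n + 1) y := by rw [add_comm]

lemma convPow_symm (hprob : IsProb μ) (hsymm : MeasSymm μ) (n : ℕ) (y : G) :
    convPow μ n y⁻¹ = convPow μ n y := by
  have := congrArg ENNReal.toReal (P_symm hprob hsymm n y)
  rwa [P, P, ENNReal.toReal_ofReal (convPow_nonneg hprob n _),
    ENNReal.toReal_ofReal (convPow_nonneg hprob n _)] at this

end semigroup

section keyident
variable {G : Type*} [Group G] {μ : G → ℝ}

lemma convPow_le_one (hprob : IsProb μ) (n : ℕ) (x : G) : convPow μ n x ≤ 1 := by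
  calc convPow μ n x ≤ ∑' y, convPow μ n y :=
        Summable.le_tsum (convPow_summable_tsum hprob n).1 x (fun j _ => convPow_nonneg hprob n j)
    _ = 1 := (convPow_summable_tsum hprob n).2

lemma mul_shift_summable (hprob : IsProb μ) (n : ℕ) (g : G) :
    Summable (fun x => convPow μ n (g⁻¹ * x) * convPow μ n x) := by
  refine (convPow_summable_tsum hprob n).1.of_nonneg_of_le
    (fun x => mul_nonneg (convPow_nonneg hprob n _) (convPow_nonneg hprob n _)) (fun x => ?_)
  calc convPow μ n (g⁻¹ * x) * convPow μ n x ≤ 1 * convPow μ n x :=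
        mul_le_mul_of_nonneg_right (convPow_le_one hprob n _) (convPow_nonneg hprob n _)
    _ = convPow μ n x := one_mul _

lemma key_ident (hprob : IsProb μ) (hsymm : MeasSymm μ) (n : ℕ) (g : G) :
    ∑' x, convPow μ n (g⁻¹ * x) * convPow μ n x = convPow μ (2 * n) g := by
  have hP : ∑' x, P μ n (g⁻¹ * x) * P μ n x = P μ (2 * n) g := by
    calc ∑' x, P μ n (g⁻¹ * x) * P μ n x
        = ∑' y, P μ n (g⁻¹ * (g * y)) * P μ n (g * y) :=
          ((Equiv.mulLeft g).tsum_eq (fun x => P μ n (g⁻¹ * x) * P μ n x)).symm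
      _ = ∑' y, P μ n y * P μ n (y⁻¹ * g⁻¹) := by
          refine tsum_congr fun y => ?_
          rw [show g⁻¹ * (g * y) = y by group]
          congr 1
          rw [show g * y = (y⁻¹ * g⁻¹)⁻¹ by group, P_symm hprob hsymm]
      _ = P μ (n + n) g⁻¹ := (P_add hprob n n g⁻¹).symm
      _ = P μ (2 * n) g := by rw [P_symm hprob hsymm, two_mul]
  have hl : ENNReal.ofReal (∑' x, convPow μ n (g⁻¹ * x) * convPow μ n x)
      = ∑' x, P μ n (g⁻¹ * x) * P μ n x := by
    rw [ENNReal.ofReal_tsum_of_nonneg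
      (fun x => mul_nonneg (convPow_nonneg hprob n _) (convPow_nonneg hprob n _))
      (mul_shift_summable hprob n g)]
    exact tsum_congr fun x => ENNReal.ofReal_mul (convPow_nonneg hprob n _)
  have := hl.trans hP
  have h2 := congrArg ENNReal.toReal this
  rwa [ENNReal.toReal_ofReal (tsum_nonneg fun x =>
      mul_nonneg (convPow_nonneg hprob n _) (convPow_nonneg hprob n _)),
    P, ENNReal.toReal_ofReal (convPow_nonneg hprob _ _)] at h2

lemma sq_summable (hprob : IsProb μ) (n : ℕ) : Summable (fun x => convPow μ n x ^ 2) := by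
  have := mul_shift_summable hprob n 1
  refine this.congr fun x => ?_
  simp [sq]

lemma sq_tsum (hprob : IsProb μ) (hsymm : MeasSymm μ) (n : ℕ) :
    ∑' x, convPow μ n x ^ 2 = convPow μ (2 * n) 1 := by
  have := key_ident hprob hsymm n 1
  rw [← this]
  exact tsum_congr fun x => by simp [sq]

lemma convPow_e_pos (hprob : IsProb μ) (hsymm : MeasSymm μ) (n : ℕ) :
    0 < convPow μ (2 * n) 1 := by
  rw [← sq_tsum hprob hsymm n]
  obtain ⟨x0, hx0⟩ : ∃ x, convPow μ n x ≠ 0 := by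
    by_contra h
    push_neg at h
    have := (convPow_summable_tsum hprob n).2
    rw [tsum_congr (fun x => h x), tsum_zero] at this
    exact one_ne_zero this.symm
  have h1 : 0 < convPow μ n x0 ^ 2 := by positivity
  calc (0:ℝ) < convPow μ n x0 ^ 2 := h1
    _ ≤ ∑' x, convPow μ n x ^ 2 :=
      Summable.le_tsum (sq_summable hprob n) x0 (fun j _ => sq_nonneg _)

lemma l2norm_convPow (hprob : IsProb μ) (hsymm : MeasSymm μ) (n : ℕ) :
    l2norm (convPow μ n) = Real.sqrt (convPow μ (2 * n) 1) := by
  rw [l2norm, sq_tsum hprob hsymm n]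

lemma l2norm_convPow_pos (hprob : IsProb μ) (hsymm : MeasSymm μ) (n : ℕ) :
    0 < l2norm (convPow μ n) := by
  rw [l2norm_convPow hprob hsymm]
  exact Real.sqrt_pos.mpr (convPow_e_pos hprob hsymm n)

lemma l2norm_convPow_sq (hprob : IsProb μ) (hsymm : MeasSymm μ) (n : ℕ) :
    l2norm (convPow μ n) ^ 2 = convPow μ (2 * n) 1 := by
  rw [l2norm_convPow hprob hsymm, Real.sq_sqrt (convPow_e_pos hprob hsymm n).le]

lemma xi_sq_summable (hprob : IsProb μ) (n : ℕ) : Summable (fun x => xi μ n x ^ 2) := by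
  have := (sq_summable hprob n).div_const (l2norm (convPow μ n) ^ 2)
  exact this.congr fun x => by rw [xi, div_pow]

lemma xi_shift_sq_summable (hprob : IsProb μ) (n : ℕ) (g : G) :
    Summable (fun x => xi μ n (g⁻¹ * x) ^ 2) := by
  have : (fun x => xi μ n (g⁻¹ * x) ^ 2) = (fun x => xi μ n x ^ 2) ∘ (Equiv.mulLeft g⁻¹) := rfl
  rw [this, Equiv.summable_iff]
  exact xi_sq_summable hprob n

lemma xi_sq_tsum (hprob : IsProb μ) (hsymm : MeasSymm μ) (n : ℕ) :
    ∑' x, xi μ n x ^ 2 = 1 := by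
  have h : ∀ x, xi μ n x ^ 2 = convPow μ n x ^ 2 / l2norm (convPow μ n) ^ 2 := by
    intro x; rw [xi, div_pow]
  rw [tsum_congr h, tsum_div_const, sq_tsum hprob hsymm, l2norm_convPow_sq hprob hsymm,
    div_self (convPow_e_pos hprob hsymm n).ne']

lemma xi_shift_sq_tsum (hprob : IsProb μ) (hsymm : MeasSymm μ) (n : ℕ) (g : G) :
    ∑' x, xi μ n (g⁻¹ * x) ^ 2 = 1 := by
  rw [← xi_sq_tsum hprob hsymm n]
  exact (Equiv.mulLeft g⁻¹).tsum_eq (fun x => xi μ n x ^ 2)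

lemma xi_mul_summable (hprob : IsProb μ) (n : ℕ) (g : G) :
    Summable (fun x => xi μ n (g⁻¹ * x) * xi μ n x) := by
  have := (mul_shift_summable hprob n g).div_const (l2norm (convPow μ n) ^ 2)
  refine this.congr fun x => ?_
  rw [xi, xi]
  field_simp

lemma xi_mul_tsum (hprob : IsProb μ) (hsymm : MeasSymm μ) (n : ℕ) (g : G) :
    ∑' x, xi μ n (g⁻¹ * x) * xi μ n x = convPow μ (2 * n) g / convPow μ (2 * n) 1 := by
  have h : ∀ x, xi μ n (g⁻¹ * x) * xi μ n x
      = convPow μ n (g⁻¹ * x) * convPow μ n x / l2norm (convPow μ n) ^ 2 := by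
    intro x; rw [xi, xi]; field_simp
  rw [tsum_congr h, tsum_div_const, key_ident hprob hsymm, l2norm_convPow_sq hprob hsymm]

lemma xi_diff_sq_tsum (hprob : IsProb μ) (hsymm : MeasSymm μ) (n : ℕ) (g : G) :
    ∑' x, (xi μ n (g⁻¹ * x) - xi μ n x) ^ 2
      = 2 - 2 * (convPow μ (2 * n) g / convPow μ (2 * n) 1) := by
  have ha := xi_shift_sq_summable hprob n g
  have hb := xi_sq_summable hprob n
  have hab := xi_mul_summable hprob n g
  have hexp : ∀ x : G, (xi μ n (g⁻¹ * x) - xi μ n x) ^ 2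
      = (xi μ n (g⁻¹ * x) ^ 2 + xi μ n x ^ 2) - 2 * (xi μ n (g⁻¹ * x) * xi μ n x) := by
    intro x; ring
  rw [tsum_congr hexp, Summable.tsum_sub (ha.add hb) (hab.mul_left 2), Summable.tsum_add ha hb,
    xi_shift_sq_tsum hprob hsymm, xi_sq_tsum hprob hsymm, tsum_mul_left,
    xi_mul_tsum hprob hsymm]
  norm_num

lemma xi_diff_sq_summable (hprob : IsProb μ) (n : ℕ) (g : G) :
    Summable (fun x => (xi μ n (g⁻¹ * x) - xi μ n x) ^ 2) := by
  have ha := xi_shift_sq_summable hprob n g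
  have hb := xi_sq_summable hprob n
  have hab := xi_mul_summable hprob n g
  refine (((ha.add hb)).sub (hab.mul_left 2)).congr fun x => ?_
  ring

end keyident

section revtriangle

lemma two_toReal_eq : ((2:ENNReal)).toReal = ((2:ℕ):ℝ) := by norm_num

lemma norm_rpow_eq_sq (c : ℝ) : ‖c‖ ^ ((2:ENNReal)).toReal = c ^ 2 := by
  rw [two_toReal_eq, Real.rpow_natCast, Real.norm_eq_abs, sq_abs]

lemma memlp_of_sq_summable {ι : Type*} {c : ι → ℝ} (hc : Summable fun i => c i ^ 2) :
    Memℓp c 2 :=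
  memℓp_gen (hc.congr fun i => (norm_rpow_eq_sq (c i)).symm)

lemma lp_norm_eq_sqrt {ι : Type*} (f : lp (fun _ : ι => ℝ) 2) :
    ‖f‖ = Real.sqrt (∑' i, (f : ∀ _ : ι, ℝ) i ^ 2) := by
  rw [lp.norm_eq_tsum_rpow (by norm_num) f, Real.sqrt_eq_rpow]
  rw [show (1 / (2:ENNReal).toReal) = (1/2 : ℝ) by norm_num]
  congr 1
  exact tsum_congr fun i => norm_rpow_eq_sq _

lemma l2_rev_triangle {ι : Type*} (a b : ι → ℝ) (ha : Summable fun i => a i ^ 2)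
    (hb : Summable fun i => b i ^ 2) :
    (Real.sqrt (∑' i, a i ^ 2) - Real.sqrt (∑' i, b i ^ 2)) ^ 2 ≤ ∑' i, (a i - b i) ^ 2 := by
  let A : lp (fun _ : ι => ℝ) 2 := ⟨a, memlp_of_sq_summable ha⟩
  let B : lp (fun _ : ι => ℝ) 2 := ⟨b, memlp_of_sq_summable hb⟩
  have hA : ((A : ∀ _ : ι, ℝ)) = a := rfl
  have hB : ((B : ∀ _ : ι, ℝ)) = b := rfl
  have hAB : ((A - B : lp (fun _ : ι => ℝ) 2) : ∀ _ : ι, ℝ) = fun i => a i - b i := by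
    rw [lp.coeFn_sub]; rfl
  have h1 : Real.sqrt (∑' i, a i ^ 2) = ‖A‖ := by rw [lp_norm_eq_sqrt A, hA]
  have h2 : Real.sqrt (∑' i, b i ^ 2) = ‖B‖ := by rw [lp_norm_eq_sqrt B, hB]
  have h3 : ‖A - B‖ = Real.sqrt (∑' i, (a i - b i) ^ 2) := by
    rw [lp_norm_eq_sqrt (A - B), hAB]
  have key : |‖A‖ - ‖B‖| ≤ ‖A - B‖ := abs_norm_sub_norm_le A B
  rw [h1, h2]
  calc (‖A‖ - ‖B‖) ^ 2 = |‖A‖ - ‖B‖| ^ 2 := (sq_abs _).symm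
    _ ≤ ‖A - B‖ ^ 2 := by
        exact pow_le_pow_left₀ (abs_nonneg _) key 2
    _ = ∑' i, (a i - b i) ^ 2 := by
        rw [h3, Real.sq_sqrt (tsum_nonneg fun i => sq_nonneg _)]

end revtriangle

section coset
variable {G : Type*} [Group G]

noncomputable def cosetEquiv (H : Subgroup G) : H × (G ⧸ H) ≃ G where
  toFun p := (p.1 : G) * (Quotient.out p.2)⁻¹
  invFun x := (⟨x * Quotient.out (((x⁻¹ : G) : G ⧸ H)), by
      have h : ((Quotient.out (((x⁻¹ : G) : G ⧸ H)) : G) : G ⧸ H) = ((x⁻¹ : G) : G ⧸ H) :=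
        QuotientGroup.out_eq' _
      have h2 := (QuotientGroup.eq).mp h.symm
      simpa using h2⟩, ((x⁻¹ : G) : G ⧸ H))
  left_inv := by
    rintro ⟨h, q⟩
    have hinv : (((h : G) * (Quotient.out q)⁻¹)⁻¹ : G) = Quotient.out q * (h : G)⁻¹ := by group
    have hmem : ((((h : G) * (Quotient.out q)⁻¹)⁻¹ : G) : G ⧸ H) = q := by
      rw [hinv]
      conv_rhs => rw [← QuotientGroup.out_eq' q]
      rw [QuotientGroup.eq]
      have h3 : ((Quotient.out q) * (h : G)⁻¹)⁻¹ * Quotient.out q = (h : G) := by group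
      rw [h3]; exact h.2
    refine Prod.ext (Subtype.ext ?_) ?_
    · show ((h : G) * (Quotient.out q)⁻¹)
          * Quotient.out (((((h : G) * (Quotient.out q)⁻¹)⁻¹ : G) : G ⧸ H)) = (h : G)
      rw [hmem]; group
    · exact hmem
  right_inv := by
    intro x
    show (x * Quotient.out (((x⁻¹ : G) : G ⧸ H)))
        * (Quotient.out (((x⁻¹ : G) : G ⧸ H)))⁻¹ = x
    group

lemma cosetEquiv_smul (H : Subgroup G) (k h : H) (q : G ⧸ H) :
    cosetEquiv H (k * h, q) = (k : G) * cosetEquiv H (h, q) := by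
  show ((k * h : H) : G) * (Quotient.out q)⁻¹ = (k : G) * ((h : G) * (Quotient.out q)⁻¹)
  push_cast
  rw [mul_assoc]

end coset

section psi
variable {G : Type*} [Group G] {μ : G → ℝ}

noncomputable def psi (μ : G → ℝ) (H : Subgroup G) (n : ℕ) (h : H) : ℝ :=
  Real.sqrt (∑' q : G ⧸ H, xi μ n (cosetEquiv H (h, q)) ^ 2)

lemma psi_sq (H : Subgroup G) (n : ℕ) (h : H) :
    psi μ H n h ^ 2 = ∑' q : G ⧸ H, xi μ n (cosetEquiv H (h, q)) ^ 2 :=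
  Real.sq_sqrt (tsum_nonneg fun q => sq_nonneg _)

lemma psi_tsum_one (hprob : IsProb μ) (hsymm : MeasSymm μ) (H : Subgroup G) (n : ℕ) :
    ∑' h : H, psi μ H n h ^ 2 = 1 := by
  have hsum : Summable fun p : H × (G ⧸ H) => xi μ n (cosetEquiv H p) ^ 2 :=
    ((cosetEquiv H).summable_iff (f := fun x => xi μ n x ^ 2)).mpr (xi_sq_summable hprob n)
  rw [tsum_congr (psi_sq H n), ← Summable.tsum_prod' hsum (fun h => hsum.prod_factor h),
    (cosetEquiv H).tsum_eq (fun x => xi μ n x ^ 2)]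
  exact xi_sq_tsum hprob hsymm n

lemma psi_shift (H : Subgroup G) (n : ℕ) (k h : H) :
    psi μ H n (k⁻¹ * h)
      = Real.sqrt (∑' q : G ⧸ H, xi μ n ((k : G)⁻¹ * cosetEquiv H (h, q)) ^ 2) := by
  rw [psi]
  congr 1
  refine tsum_congr fun q => ?_
  rw [cosetEquiv_smul H k⁻¹ h q]
  rfl

lemma psi_bound (hprob : IsProb μ) (H : Subgroup G) (n : ℕ) (k : H) :
    ∑' h : H, (psi μ H n (k⁻¹ * h) - psi μ H n h) ^ 2
      ≤ ∑' x : G, (xi μ n ((k : G)⁻¹ * x) - xi μ n x) ^ 2 := by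
  set g : G := (k : G) with hg
  have hΔ : Summable (fun x : G => (xi μ n (g⁻¹ * x) - xi μ n x) ^ 2) :=
    xi_diff_sq_summable hprob n g
  have hsumΔ : Summable fun p : H × (G ⧸ H) =>
      (xi μ n (g⁻¹ * cosetEquiv H p) - xi μ n (cosetEquiv H p)) ^ 2 :=
    ((cosetEquiv H).summable_iff (f := fun x => (xi μ n (g⁻¹ * x) - xi μ n x) ^ 2)).mpr hΔ
  have hsA : Summable fun p : H × (G ⧸ H) => xi μ n (g⁻¹ * cosetEquiv H p) ^ 2 :=
    ((cosetEquiv H).summable_iff (f := fun x => xi μ n (g⁻¹ * x) ^ 2)).mpr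
      (xi_shift_sq_summable hprob n g)
  have hsB : Summable fun p : H × (G ⧸ H) => xi μ n (cosetEquiv H p) ^ 2 :=
    ((cosetEquiv H).summable_iff (f := fun x => xi μ n x ^ 2)).mpr (xi_sq_summable hprob n)
  have hmarg : Summable (fun h : H => ∑' q : G ⧸ H,
      (xi μ n (g⁻¹ * cosetEquiv H (h, q)) - xi μ n (cosetEquiv H (h, q))) ^ 2) :=
    ((summable_prod_of_nonneg (fun p => sq_nonneg _)).1 hsumΔ).2
  have hptwise : ∀ h : H, (psi μ H n (k⁻¹ * h) - psi μ H n h) ^ 2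
      ≤ ∑' q : G ⧸ H, (xi μ n (g⁻¹ * cosetEquiv H (h, q)) - xi μ n (cosetEquiv H (h, q))) ^ 2 := by
    intro h
    rw [psi_shift H n k h, psi]
    exact l2_rev_triangle (fun q => xi μ n (g⁻¹ * cosetEquiv H (h, q)))
      (fun q => xi μ n (cosetEquiv H (h, q))) (hsA.prod_factor h) (hsB.prod_factor h)
  have hLsum : Summable (fun h : H => (psi μ H n (k⁻¹ * h) - psi μ H n h) ^ 2) :=
    hmarg.of_nonneg_of_le (fun h => sq_nonneg _) hptwise
  calc ∑' h : H, (psi μ H n (k⁻¹ * h) - psi μ H n h) ^ 2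
      ≤ ∑' h : H, ∑' q : G ⧸ H,
          (xi μ n (g⁻¹ * cosetEquiv H (h, q)) - xi μ n (cosetEquiv H (h, q))) ^ 2 :=
        Summable.tsum_le_tsum hptwise hLsum hmarg
    _ = ∑' p : H × (G ⧸ H), (xi μ n (g⁻¹ * cosetEquiv H p) - xi μ n (cosetEquiv H p)) ^ 2 :=
        (Summable.tsum_prod' hsumΔ (fun h => hsumΔ.prod_factor h)).symm
    _ = ∑' x : G, (xi μ n (g⁻¹ * x) - xi μ n x) ^ 2 :=
        (cosetEquiv H).tsum_eq (fun x => (xi μ n (g⁻¹ * x) - xi μ n x) ^ 2)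

end psi


theorem stmt5 {G : Type*} [Group G] [Group.FG G] (μ : G → ℝ)
    (hprob : IsProb μ) (hsymm : MeasSymm μ) (haper : IsAperiodic μ)
    (hgen : GeneratingSupport μ) :
    ∀ H : Subgroup G, (H : Set G) = Amu μ → ReiterAmenable H := by
  intro H hH
  refine ⟨fun n => psi μ H n, fun n => psi_tsum_one hprob hsymm H n, ?_⟩
  intro k
  have hgA : (k : G) ∈ Amu μ := by rw [← hH]; exact k.2
  have hr : Tendsto (fun n => convPow μ (2*n) (k : G) / convPow μ (2*n) 1) atTop (𝓝 1) := by
    have h2 : Tendsto (fun n : ℕ => 2 * n) atTop atTop :=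
      tendsto_atTop_mono (fun n => by simp only [id_eq]; omega) tendsto_id
    exact hgA.comp h2
  have hD : Tendsto (fun n => ∑' x : G, (xi μ n ((k : G)⁻¹ * x) - xi μ n x) ^ 2) atTop (𝓝 0) := by
    have heq : (fun n => ∑' x : G, (xi μ n ((k : G)⁻¹ * x) - xi μ n x) ^ 2)
        = fun n => 2 - 2 * (convPow μ (2*n) (k : G) / convPow μ (2*n) 1) :=
      funext fun n => xi_diff_sq_tsum hprob hsymm n (k : G)
    rw [heq]
    have h4 := (tendsto_const_nhds (x := (2:ℝ)) (f := atTop)).sub (hr.const_mul 2)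
    simpa using h4
  have hup : Tendsto (fun n => Real.sqrt (∑' x : G, (xi μ n ((k : G)⁻¹ * x) - xi μ n x) ^ 2))
      atTop (𝓝 0) := by
    have h5 := (Real.continuous_sqrt.tendsto 0).comp hD
    simpa [Function.comp_def] using h5
  refine tendsto_of_tendsto_of_tendsto_of_le_of_le (g := fun _ => (0:ℝ)) tendsto_const_nhds hup
    (fun n => Real.sqrt_nonneg _) ?_
  intro n
  exact Real.sqrt_le_sqrt (psi_bound hprob H n k)
end
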